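/- Let S₁ and S₂ be disjoint nonempty finite sets of points in a real inner product space with |S₁| = m₁ ≥ 2 and |S₂| = m₂ ≥ 1, let x ∈ S₁, and let c₁ and c₂ be the centroids of S₁ and S₂ respectively. Define f(S) = ∑_{y ∈ S} ‖y − c(S)‖² for a nonempty finite set S with centroid c(S). If ‖x − c₂‖² < ((1 + 1/m₂)/(1 − 1/m₁)) · ‖x − c₁‖², then f(S₁ \ {x}) + f(S₂ ∪ {x}) < f(S₁) + f(S₂); that is, transferring x from cluster S₁ to cluster S₂ strictly decreases the total sum of squared distances of the points to their respective cluster centroids. -/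

import Mathlib

variable {E : Type*} [NormedAddCommGroup E] [InnerProductSpace ℝ E]


/-- The centroid (arithmetic mean) of a finite set of points. -/
noncomputable def centroid (S : Finset E) : E :=
  (S.card : ℝ)⁻¹ • ∑ y ∈ S, y

/-- The squared-Euclidean cluster cost of a finite set of points:
the sum of squared distances of its points to its centroid. -/
noncomputable def cost (S : Finset E) : ℝ :=
  ∑ y ∈ S, ‖y - centroid S‖ ^ 2

lemma sum_sub_centroid (S : Finset E) (hS : S.Nonempty) :
    ∑ y ∈ S, (y - centroid S) = 0 := by
  have hc : (S.card : ℝ) ≠ 0 := by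
    exact_mod_cast Finset.card_ne_zero_of_mem hS.choose_spec
  rw [Finset.sum_sub_distrib, Finset.sum_const, centroid,
    ← Nat.cast_smul_eq_nsmul ℝ, smul_smul, mul_inv_cancel₀ hc, one_smul, sub_self]

lemma parallel_axis (S : Finset E) (hS : S.Nonempty) (b : E) :
    ∑ y ∈ S, ‖y - b‖ ^ 2 = cost S + (S.card : ℝ) * ‖centroid S - b‖ ^ 2 := by
  have : ∀ y ∈ S, ‖y - b‖ ^ 2 =
      ‖y - centroid S‖ ^ 2 + 2 * inner ℝ (y - centroid S) (centroid S - b) +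
        ‖centroid S - b‖ ^ 2 := by
    intro y _
    have hy : y - b = (y - centroid S) + (centroid S - b) := by abel
    rw [hy, norm_add_sq_real]
  rw [Finset.sum_congr rfl this]
  rw [Finset.sum_add_distrib, Finset.sum_add_distrib, ← Finset.mul_sum,
    ← sum_inner, sum_sub_centroid S hS, inner_zero_left]
  simp [cost, Finset.sum_const, nsmul_eq_mul]

lemma cost_insert' (S : Finset E) [DecidableEq E] (hS : S.Nonempty) (x : E) (hx : x ∉ S) :
    cost (insert x S) = cost S + (S.card : ℝ) / (S.card + 1) * ‖x - centroid S‖ ^ 2 := by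
  have hc : (S.card : ℝ) ≠ 0 := by
    exact_mod_cast Finset.card_ne_zero_of_mem hS.choose_spec
  have hc1 : (S.card : ℝ) + 1 ≠ 0 := by positivity
  have hcard : (insert x S).card = S.card + 1 := Finset.card_insert_of_notMem hx
  have hcent : centroid (insert x S) - centroid S =
      ((S.card : ℝ) + 1)⁻¹ • (x - centroid S) := by
    rw [centroid, centroid, hcard, Finset.sum_insert hx]
    push_cast
    match_scalars <;> field_simp <;> ring
  have hpa := parallel_axis (insert x S) (Finset.insert_nonempty x S) (centroid S)
  rw [Finset.sum_insert hx] at hpa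
  have hsum : ∑ y ∈ S, ‖y - centroid S‖ ^ 2 = cost S := rfl
  rw [hsum, hcard, hcent, norm_smul, Real.norm_eq_abs,
    abs_of_pos (by positivity : (0:ℝ) < ((S.card : ℝ) + 1)⁻¹)] at hpa
  push_cast at hpa ⊢
  have ht : ((S.card:ℝ)+1) * (((S.card:ℝ)+1)⁻¹ * ‖x - centroid S‖)^2 =
      ((S.card:ℝ)+1)⁻¹ * ‖x - centroid S‖^2 := by
    field_simp
  have hq : (S.card:ℝ)/((S.card:ℝ)+1) = 1 - ((S.card:ℝ)+1)⁻¹ := by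
    field_simp
    ring
  rw [ht] at hpa
  rw [hq]
  linarith

/-- If `x ∈ S₁`, `|S₁| = m₁ ≥ 2`, `|S₂| = m₂ ≥ 1`, and the squared distance from `x`
to the centroid of `S₂` is less than `((1 + 1/m₂)/(1 − 1/m₁))` times the squared
distance from `x` to the centroid of `S₁`, then transferring `x` from `S₁` to `S₂`
strictly decreases the total sum of squared distances to the cluster centroids. -/
theorem transfer_decreases_cost [DecidableEq E]
    (S₁ S₂ : Finset E) (hdisj : Disjoint S₁ S₂)
    (m₁ m₂ : ℕ) (hm₁ : S₁.card = m₁) (hm₂ : S₂.card = m₂)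
    (hm₁' : 2 ≤ m₁) (hm₂' : 1 ≤ m₂)
    (x : E) (hx : x ∈ S₁)
    (h : ‖x - centroid S₂‖ ^ 2 <
      (1 + 1 / (m₂ : ℝ)) / (1 - 1 / (m₁ : ℝ)) * ‖x - centroid S₁‖ ^ 2) :
    cost (S₁.erase x) + cost (insert x S₂) < cost S₁ + cost S₂ := by
  set S' := S₁.erase x with hS'
  have hn1 : (2:ℝ) ≤ (m₁ : ℝ) := by exact_mod_cast hm₁'
  have hn2 : (1:ℝ) ≤ (m₂ : ℝ) := by exact_mod_cast hm₂'
  have hn1pos : (0:ℝ) < (m₁ : ℝ) - 1 := by linarith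
  have hcard' : S'.card = m₁ - 1 := by rw [hS', Finset.card_erase_of_mem hx, hm₁]
  have hcardR : (S'.card : ℝ) = (m₁ : ℝ) - 1 := by
    rw [hcard']
    have : (1:ℕ) ≤ m₁ := le_trans (by norm_num) hm₁'
    push_cast [this]
    ring
  have hS'ne : S'.Nonempty := by
    rw [← Finset.card_pos, hcard']
    omega
  have hxS' : x ∉ S' := Finset.notMem_erase x S₁
  have hins : insert x S' = S₁ := Finset.insert_erase hx
  have hxS₂ : x ∉ S₂ := fun hc => (Finset.disjoint_left.mp hdisj hx) hc
  have hS₂ne : S₂.Nonempty := by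
    rw [← Finset.card_pos, hm₂]; omega
  -- centroid relation
  have hsum' : ∑ y ∈ S', y = (∑ y ∈ S₁, y) - x := by
    have := Finset.add_sum_erase S₁ id hx
    simp only [id] at this
    rw [hS', eq_sub_iff_add_eq, add_comm]
    exact this
  have hcent : x - centroid S' = ((m₁:ℝ)/((m₁:ℝ)-1)) • (x - centroid S₁) := by
    rw [centroid, centroid, hsum', hcardR, hm₁]
    match_scalars <;> field_simp <;> ring
  have hnorm : ‖x - centroid S'‖^2 = ((m₁:ℝ)/((m₁:ℝ)-1))^2 * ‖x - centroid S₁‖^2 := by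
    rw [hcent, norm_smul, Real.norm_eq_abs, abs_of_pos (by positivity), mul_pow]
  have hc1 : cost S₁ = cost S' + (((m₁:ℝ)-1)/(m₁:ℝ)) *
      (((m₁:ℝ)/((m₁:ℝ)-1))^2 * ‖x - centroid S₁‖^2) := by
    conv_lhs => rw [← hins]
    rw [cost_insert' S' hS'ne x hxS', hcardR, hnorm]
    ring_nf
  have hc2 : cost (insert x S₂) = cost S₂ + ((m₂:ℝ)/((m₂:ℝ)+1)) * ‖x - centroid S₂‖^2 := by
    rw [cost_insert' S₂ hS₂ne x hxS₂, hm₂]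
  rw [hc1, hc2]
  have hkey : ((m₂:ℝ)/((m₂:ℝ)+1)) * ‖x - centroid S₂‖^2 <
      (((m₁:ℝ)-1)/(m₁:ℝ)) * (((m₁:ℝ)/((m₁:ℝ)-1))^2 * ‖x - centroid S₁‖^2) := by
    have hcoef : ((m₂:ℝ)/((m₂:ℝ)+1)) * ((1 + 1 / (m₂ : ℝ)) / (1 - 1 / (m₁ : ℝ))) =
        (((m₁:ℝ)-1)/(m₁:ℝ)) * (((m₁:ℝ)/((m₁:ℝ)-1))^2) := by
      have h1 : (m₁:ℝ) ≠ 0 := by linarith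
      have h2 : (m₂:ℝ) ≠ 0 := by linarith
      have h3 : (m₁:ℝ) - 1 ≠ 0 := by linarith
      have h4 : (m₂:ℝ) + 1 ≠ 0 := by linarith
      field_simp
    calc ((m₂:ℝ)/((m₂:ℝ)+1)) * ‖x - centroid S₂‖^2
        < ((m₂:ℝ)/((m₂:ℝ)+1)) * ((1 + 1 / (m₂ : ℝ)) / (1 - 1 / (m₁ : ℝ)) * ‖x - centroid S₁‖ ^ 2) := by
          apply mul_lt_mul_of_pos_left h (by positivity)
      _ = (((m₁:ℝ)-1)/(m₁:ℝ)) * (((m₁:ℝ)/((m₁:ℝ)-1))^2 * ‖x - centroid S₁‖^2) := by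
          rw [← mul_assoc, hcoef, mul_assoc]
  linarith
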